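/- Let H be a subgroup of locally finite index in a countable group G, endow G with a proper left-invariant metric and G/H with a proper G-invariant metric, and let q : G → G/H, q(x) = xH, be the quotient map. Then for every subsemigroup S of G with S·H = G, the map q has a bornologous section s : G/H → G with s(G/H) ⊆ S (i.e., q(s(u)) = u for all u ∈ G/H). -/

import Mathlib

/-- `d` is a metric (as a two-variable real function). -/
def IsMetricFun {X : Type*} (d : X → X → ℝ) : Prop :=
  (∀ x y : X, d x y = 0 ↔ x = y) ∧ (∀ x y : X, d x y = d y x) ∧
    (∀ x y z : X, d x z ≤ d x y + d y z)

/-- A subgroup `H` of a group `G` has locally finite index in `G`: `H` has finite index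
in every subgroup of `G` generated by `H ∪ F` for a finite set `F ⊆ G`. -/
def LocallyFiniteIndex {G : Type*} [Group G] (H : Subgroup G) : Prop :=
  ∀ F : Finset G, H.relIndex (H ⊔ Subgroup.closure (F : Set G)) ≠ 0

section Aux
variable {G : Type} [Group G] (H : Subgroup G) (S : Subsemigroup G)
  (hSH : ∀ g : G, ∃ s ∈ S, ∃ h ∈ H, g = s * h)

open Classical in
/-- choose a representative of the left `K`-coset of `x`, lying in `S` unless `x ∈ K`. -/
noncomputable def ellAux (K : Subgroup G) (x : G) : G :=
  if x ∈ K then 1 else (hSH (Quotient.out (QuotientGroup.mk (s := K) x))).choose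

variable {H S}

theorem ellAux_of_mem {K : Subgroup G} {x : G} (hx : x ∈ K) : ellAux H S hSH K x = 1 := by
  simp [ellAux, hx]

theorem ellAux_S {K : Subgroup G} (hHK : H ≤ K) (x : G) :
    ellAux H S hSH K x = 1 ∨ ellAux H S hSH K x ∈ S := by
  by_cases hx : x ∈ K
  · exact Or.inl (ellAux_of_mem hSH hx)
  · right
    simp only [ellAux, hx, if_false]
    exact (hSH _).choose_spec.1

theorem ellAux_spec {K : Subgroup G} (hHK : H ≤ K) (x : G) :
    (ellAux H S hSH K x)⁻¹ * x ∈ K := by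
  by_cases hx : x ∈ K
  · rw [ellAux_of_mem hSH hx]; simpa using hx
  · simp only [ellAux, hx, if_false]
    obtain ⟨-, h, hh, hg⟩ := (hSH (Quotient.out (QuotientGroup.mk (s := K) x))).choose_spec
    set ρ := (hSH (Quotient.out (QuotientGroup.mk (s := K) x))).choose with hρ
    have h1 : ρ⁻¹ * (Quotient.out (QuotientGroup.mk (s := K) x)) = h := by
      rw [hg]; group
    have h2 : (Quotient.out (QuotientGroup.mk (s := K) x))⁻¹ * x ∈ K := by
      rw [← QuotientGroup.eq, QuotientGroup.out_eq']
    have : ρ⁻¹ * x = (ρ⁻¹ * (Quotient.out (QuotientGroup.mk (s := K) x))) *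
        ((Quotient.out (QuotientGroup.mk (s := K) x))⁻¹ * x) := by group
    rw [this, h1]
    exact K.mul_mem (hHK hh) h2

theorem ellAux_congr {K : Subgroup G} {x y : G} (hxy : x⁻¹ * y ∈ K) :
    ellAux H S hSH K x = ellAux H S hSH K y := by
  have hmk : (QuotientGroup.mk (s := K) x) = QuotientGroup.mk (s := K) y :=
    QuotientGroup.eq.mpr hxy
  have hmem : x ∈ K ↔ y ∈ K := by
    constructor
    · intro hx; simpa using K.mul_mem hx hxy
    · intro hy
      have : y * (x⁻¹ * y)⁻¹ ∈ K := K.mul_mem hy (K.inv_mem hxy)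
      simpa [mul_assoc] using this
  by_cases hx : x ∈ K
  · rw [ellAux_of_mem hSH hx, ellAux_of_mem hSH (hmem.mp hx)]
  · have hy : ¬ y ∈ K := fun h => hx (hmem.mpr h)
    simp only [ellAux, hx, hy, if_false, hmk]

variable (H S)

/-- iterated coset-representative normal form map. -/
noncomputable def lamAux (K : ℕ → Subgroup G) : ℕ → G → G
  | 0 => fun _ => 1
  | (n+1) => fun x =>
      ellAux H S hSH (K n) x * lamAux K n ((ellAux H S hSH (K n) x)⁻¹ * x)

variable {H S}
variable {K : ℕ → Subgroup G}

theorem lamAux_mem (hHK : ∀ n, H ≤ K n) (hK0 : K 0 ≤ H) :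
    ∀ n (x : G), x ∈ K n → (lamAux H S hSH K n x)⁻¹ * x ∈ H
  | 0, x, hx => by simpa [lamAux] using hK0 hx
  | (n+1), x, _ => by
    have h1 := ellAux_spec hSH (hHK n) x
    have h2 := lamAux_mem hHK hK0 n ((ellAux H S hSH (K n) x)⁻¹ * x) h1
    simpa [lamAux, mul_assoc] using h2

theorem lamAux_mulH (hHK : ∀ n, H ≤ K n) :
    ∀ n (x h : G), h ∈ H → lamAux H S hSH K n (x * h) = lamAux H S hSH K n x
  | 0, _, _, _ => rfl
  | (n+1), x, h, hh => by
    have he : ellAux H S hSH (K n) (x * h) = ellAux H S hSH (K n) x := by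
      refine (ellAux_congr hSH ?_).symm
      simpa using (hHK n) hh
    have := lamAux_mulH hHK n ((ellAux H S hSH (K n) x)⁻¹ * x) h hh
    simp only [lamAux, he, mul_assoc] at this ⊢
    rw [this]

theorem lamAux_succ_of_mem {n : ℕ} {x : G} (hx : x ∈ K n) :
    lamAux H S hSH K (n+1) x = lamAux H S hSH K n x := by
  simp [lamAux, ellAux_of_mem hSH hx]

theorem lamAux_of_le (hmono : Monotone K) {m n : ℕ} (hmn : m ≤ n) {x : G} (hx : x ∈ K m) :
    lamAux H S hSH K n x = lamAux H S hSH K m x := by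
  induction n with
  | zero =>
    have : m = 0 := by omega
    subst this; rfl
  | succ n ih =>
    rcases Nat.lt_or_ge m (n+1) with h | h
    · have hmn' : m ≤ n := by omega
      rw [lamAux_succ_of_mem hSH (hmono hmn' hx), ih hmn']
    · have : m = n + 1 := by omega
      subst this; rfl

theorem lamAux_S (hHK : ∀ n, H ≤ K n) :
    ∀ n (x : G), lamAux H S hSH K n x = 1 ∨ lamAux H S hSH K n x ∈ S
  | 0, _ => Or.inl rfl
  | (n+1), x => by
    have key : lamAux H S hSH K (n+1) x
        = ellAux H S hSH (K n) x * lamAux H S hSH K n ((ellAux H S hSH (K n) x)⁻¹ * x) := rfl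
    have h2 := lamAux_S hHK n ((ellAux H S hSH (K n) x)⁻¹ * x)
    rw [key]
    rcases ellAux_S hSH (hHK n) x with he | he
    · rw [he] at h2 ⊢
      rcases h2 with hl | hl
      · left; rw [hl, one_mul]
      · right; simpa using hl
    · rcases h2 with hl | hl
      · right; rw [hl, mul_one]; exact he
      · right; exact S.mul_mem he hl

theorem lamAux_cocycle (hHK : ∀ n, H ≤ K n) (hmono : Monotone K) (m : ℕ) (b : G) (hb : b ∈ K m) :
    ∀ k (x : G), x ∈ K (m + k) → ∃ y ∈ K m,
      (lamAux H S hSH K (m+k) x)⁻¹ * lamAux H S hSH K (m+k) (x * b) =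
        (lamAux H S hSH K m y)⁻¹ * lamAux H S hSH K m (y * b)
  | 0, x, hx => ⟨x, hx, rfl⟩
  | (k+1), x, _ => by
    set l := ellAux H S hSH (K (m+k)) x with hl
    have he : ellAux H S hSH (K (m+k)) (x * b) = l := by
      refine (ellAux_congr hSH ?_).symm
      simpa using hmono (Nat.le_add_right m k) hb
    have hx' : l⁻¹ * x ∈ K (m + k) := ellAux_spec hSH (hHK _) x
    obtain ⟨y, hy, hcoc⟩ := lamAux_cocycle hHK hmono m b hb k (l⁻¹ * x) hx'
    refine ⟨y, hy, ?_⟩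
    have hassoc : l⁻¹ * (x * b) = (l⁻¹ * x) * b := by group
    calc (lamAux H S hSH K (m+k+1) x)⁻¹ * lamAux H S hSH K (m+k+1) (x * b)
        = (l * lamAux H S hSH K (m+k) (l⁻¹ * x))⁻¹ *
            (l * lamAux H S hSH K (m+k) ((l⁻¹ * x) * b)) := by
          simp only [lamAux, ← hl, he, hassoc]
      _ = (lamAux H S hSH K (m+k) (l⁻¹ * x))⁻¹ * lamAux H S hSH K (m+k) ((l⁻¹ * x) * b) := by
          group
      _ = _ := hcoc

end Aux



/-- Let `H` be a subgroup of locally finite index in a countable group `G`, where `G`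
carries a proper left-invariant metric and `G ⧸ H` a proper `G`-invariant metric `dq`.
For every subsemigroup `S` of `G` with `S·H = G`, the quotient map `q : G → G ⧸ H` has a
bornologous section `s : G ⧸ H → G` taking values in `S`. -/
theorem exists_bornologous_section_into_subsemigroup
    (G : Type) [Group G] [Countable G] [MetricSpace G] (H : Subgroup G)
    (hinv : ∀ g x y : G, dist (g * x) (g * y) = dist x y)
    (hprop : ∀ (x : G) (r : ℝ), {y : G | dist x y ≤ r}.Finite)
    (hH : LocallyFiniteIndex H)
    (dq : G ⧸ H → G ⧸ H → ℝ) (hdq : IsMetricFun dq)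
    (hdqinv : ∀ (g : G) (u v : G ⧸ H), dq (g • u) (g • v) = dq u v)
    (hdqprop : ∀ (u : G ⧸ H) (r : ℝ), {v : G ⧸ H | dq u v ≤ r}.Finite)
    (S : Subsemigroup G) (hSH : ∀ g : G, ∃ s ∈ S, ∃ h ∈ H, g = s * h) :
    ∃ s : G ⧸ H → G, (∀ u : G ⧸ H, (QuotientGroup.mk (s u) : G ⧸ H) = u) ∧
      (∀ u : G ⧸ H, s u ∈ S) ∧
      (∀ δ : ℝ, 0 ≤ δ → ∃ ε : ℝ, 0 ≤ ε ∧
        ∀ u v : G ⧸ H, dq u v ≤ δ → dist (s u) (s v) ≤ ε) := by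
  
  classical
  obtain ⟨e, he⟩ := exists_surjective_nat G
  set K : ℕ → Subgroup G := fun n => H ⊔ Subgroup.closure (e '' Set.Iio n) with hKdef
  have hHK : ∀ n, H ≤ K n := fun n => le_sup_left
  have hK0 : K 0 ≤ H := by
    have himg : e '' Set.Iio 0 = ∅ := by
      ext g; simp
    simp only [hKdef, himg, Subgroup.closure_empty, sup_bot_eq, le_refl]
  have hmono : Monotone K := by
    intro a b hab
    exact sup_le_sup_left (Subgroup.closure_mono
      (Set.image_mono fun i (hi : i < a) => lt_of_lt_of_le hi hab)) _
  have hcov : ∀ x : G, ∃ n, x ∈ K n := by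
    intro x
    obtain ⟨i, rfl⟩ := he x
    refine ⟨i + 1, ?_⟩
    have h1 : e i ∈ Subgroup.closure (e '' Set.Iio (i + 1)) :=
      Subgroup.subset_closure ⟨i, Nat.lt_succ_self i, rfl⟩
    exact SetLike.le_def.mp le_sup_right h1
  have hKfin : ∀ n, Finite ((K n) ⧸ H.subgroupOf (K n)) := by
    intro n
    have h1 := hH ((Finset.range n).image e)
    have h2 : H ⊔ Subgroup.closure ((((Finset.range n).image e : Finset G)) : Set G) = K n := by
      congr 2
      simp [Finset.coe_image]
    rw [LocallyFiniteIndex] at *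
    rw [h2, Subgroup.relIndex, Subgroup.index_eq_card] at h1
    exact (Nat.card_ne_zero.mp h1).2
  -- the global normal form map
  set Lam : G → G := fun x => lamAux H S hSH K (Nat.find (hcov x)) x with hLam
  have hLam_eq : ∀ n (x : G), x ∈ K n → Lam x = lamAux H S hSH K n x := by
    intro n x hx
    rcases le_total (Nat.find (hcov x)) n with h | h
    · rw [lamAux_of_le hSH hmono h (Nat.find_spec (hcov x))]
    · rw [hLam]
      exact lamAux_of_le hSH hmono h hx
  have hLamH : ∀ x : G, (Lam x)⁻¹ * x ∈ H :=
    fun x => lamAux_mem hSH hHK hK0 _ x (Nat.find_spec (hcov x))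
  have hLam_congr : ∀ x y : G, x⁻¹ * y ∈ H → Lam x = Lam y := by
    intro x y hxy
    obtain ⟨n, hx⟩ := hcov x
    have hy : y ∈ K n := by
      have h1 := (K n).mul_mem hx (hHK n hxy)
      simpa [mul_assoc] using h1
    rw [hLam_eq n x hx, hLam_eq n y hy]
    calc lamAux H S hSH K n x = lamAux H S hSH K n (x * (x⁻¹ * y)) :=
          (lamAux_mulH hSH hHK n x _ hxy).symm
      _ = lamAux H S hSH K n y := by rw [mul_inv_cancel_left]
  have hLamS : ∀ x : G, Lam x = 1 ∨ Lam x ∈ S := fun x => lamAux_S hSH hHK _ x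
  have hLam_coc : ∀ m (b : G), b ∈ K m → ∀ x : G, ∃ y ∈ K m,
      (Lam x)⁻¹ * Lam (x * b) = (lamAux H S hSH K m y)⁻¹ * lamAux H S hSH K m (y * b) := by
    intro m b hb x
    obtain ⟨n0, hx0⟩ := hcov x
    have hx : x ∈ K (max n0 m) := hmono (le_max_left _ _) hx0
    have hbn : b ∈ K (max n0 m) := hmono (le_max_right _ _) hb
    have hxb : x * b ∈ K (max n0 m) := (K _).mul_mem hx hbn
    have hn : max n0 m = m + (max n0 m - m) := by omega
    obtain ⟨y, hy, hc⟩ := lamAux_cocycle hSH hHK hmono m b hb (max n0 m - m) x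
      (by rw [← hn]; exact hx)
    rw [← hn] at hc
    exact ⟨y, hy, by rw [hLam_eq _ x hx, hLam_eq _ (x * b) hxb]; exact hc⟩
  -- the base point in S ∩ H
  obtain ⟨σ, hσS, h0, hh0, hσ1⟩ := hSH 1
  have hσH : σ ∈ H := by
    have h1 : σ = h0⁻¹ := eq_inv_of_mul_eq_one_left hσ1.symm
    rw [h1]; exact H.inv_mem hh0
  -- the section
  set s : G ⧸ H → G := fun u => Lam (Quotient.out u) * σ with hs
  have hsec : ∀ u : G ⧸ H, (QuotientGroup.mk (s u) : G ⧸ H) = u := by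
    intro u
    have h1 : (QuotientGroup.mk (s u) : G ⧸ H) = QuotientGroup.mk (Quotient.out u) := by
      rw [QuotientGroup.eq]
      have h2 : (s u)⁻¹ * Quotient.out u
          = σ⁻¹ * ((Lam (Quotient.out u))⁻¹ * Quotient.out u) := by
        rw [hs]; group
      rw [h2]
      exact H.mul_mem (H.inv_mem hσH) (hLamH _)
    rw [h1, QuotientGroup.out_eq']
  have hmemS : ∀ u : G ⧸ H, s u ∈ S := by
    intro u
    rcases hLamS (Quotient.out u) with h1 | h1
    · rw [hs]; simp only [h1, one_mul]; exact hσS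
    · exact S.mul_mem h1 hσS
  refine ⟨s, hsec, hmemS, ?_⟩
  intro δ hδ
  have hB : {w : G ⧸ H | dq (QuotientGroup.mk 1) w ≤ δ}.Finite := hdqprop _ δ
  have hDfin : ((fun w : G ⧸ H => σ * Quotient.out w) ''
      {w : G ⧸ H | dq (QuotientGroup.mk 1) w ≤ δ}).Finite := hB.image _
  set D : Set G := (fun w : G ⧸ H => σ * Quotient.out w) ''
      {w : G ⧸ H | dq (QuotientGroup.mk 1) w ≤ δ} with hD
  set m := hDfin.toFinset.sup (fun b => Nat.find (hcov b)) with hm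
  have hDK : ∀ b ∈ D, b ∈ K m := by
    intro b hb
    have hb' : b ∈ hDfin.toFinset := (Set.Finite.mem_toFinset hDfin).mpr hb
    have h1 : (fun b => Nat.find (hcov b)) b ≤ m :=
      Finset.le_sup (f := fun b => Nat.find (hcov b)) hb'
    exact hmono h1 (Nat.find_spec (hcov b))
  haveI := hKfin m
  set fq : (K m) ⧸ H.subgroupOf (K m) → G :=
    fun q => lamAux H S hSH K m ((Quotient.out q : K m) : G) with hfq
  have hmemR : ∀ y : G, y ∈ K m → lamAux H S hSH K m y ∈ Set.range fq := by
    intro y hy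
    refine ⟨QuotientGroup.mk (⟨y, hy⟩ : K m), ?_⟩
    set q := QuotientGroup.mk (s := H.subgroupOf (K m)) (⟨y, hy⟩ : K m) with hq
    have h1 : ((Quotient.out q : K m) : G)⁻¹ * y ∈ H := by
      have h2 : QuotientGroup.mk (Quotient.out q) = q := QuotientGroup.out_eq' q
      rw [hq] at h2
      have h3 := QuotientGroup.eq.mp h2
      simpa [Subgroup.mem_subgroupOf] using h3
    have e1 : fq q = Lam ((Quotient.out q : K m) : G) :=
      (hLam_eq m _ (Quotient.out q).2).symm
    have e2 : lamAux H S hSH K m y = Lam y := (hLam_eq m y hy).symm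
    rw [e1, e2]
    exact hLam_congr _ _ h1
  have hRfin : (Set.range fq).Finite := Set.finite_range fq
  have hCfin : ((fun p : G × G => dist (1 : G) (σ⁻¹ * (p.1⁻¹ * p.2) * σ)) ''
      ((Set.range fq) ×ˢ (Set.range fq))).Finite := (hRfin.prod hRfin).image _
  obtain ⟨ε0, hub⟩ := hCfin.bddAbove
  refine ⟨max ε0 0, le_max_right _ _, ?_⟩
  intro u v huv
  have h1 : (s u)⁻¹ • u = (QuotientGroup.mk (1 : G) : G ⧸ H) := by
    calc (s u)⁻¹ • u = (s u)⁻¹ • (QuotientGroup.mk (s u) : G ⧸ H) := by rw [hsec u]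
      _ = QuotientGroup.mk ((s u)⁻¹ * s u) := by rw [MulAction.Quotient.smul_mk, smul_eq_mul]
      _ = QuotientGroup.mk (1 : G) := by rw [inv_mul_cancel]
  have hw : dq (QuotientGroup.mk 1) ((s u)⁻¹ • v) ≤ δ := by
    calc dq (QuotientGroup.mk 1) ((s u)⁻¹ • v) = dq ((s u)⁻¹ • u) ((s u)⁻¹ • v) := by rw [h1]
      _ = dq u v := hdqinv _ u v
      _ ≤ δ := huv
  set w : G ⧸ H := (s u)⁻¹ • v with hwdef
  set b : G := σ * Quotient.out w with hb
  have hbD : b ∈ D := ⟨w, hw, rfl⟩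
  have hbK : b ∈ K m := hDK b hbD
  have hveq : v = QuotientGroup.mk (s u * Quotient.out w) := by
    have h2 : s u • w = v := smul_inv_smul (s u) v
    rw [← h2, ← MulAction.Quotient.mk_smul_out, smul_eq_mul]
  have hsv : s v = Lam (Lam (Quotient.out u) * b) * σ := by
    have h3 : s u * Quotient.out w = Lam (Quotient.out u) * b := by
      rw [hs, hb, mul_assoc]
    show Lam (Quotient.out v) * σ = _
    rw [← h3] at *
    refine congrArg (· * σ) (hLam_congr _ _ ?_)
    have h4 : QuotientGroup.mk (Quotient.out v) = QuotientGroup.mk (s u * Quotient.out w) :=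
      (QuotientGroup.out_eq' v).trans hveq
    exact QuotientGroup.eq.mp h4
  obtain ⟨y, hy, hcoc⟩ := hLam_coc m b hbK (Lam (Quotient.out u))
  have hidem : Lam (Lam (Quotient.out u)) = Lam (Quotient.out u) :=
    hLam_congr _ _ (hLamH (Quotient.out u))
  rw [hidem] at hcoc
  have hdist : dist (s u) (s v)
      = dist (1 : G) (σ⁻¹ * ((Lam (Quotient.out u))⁻¹ * Lam (Lam (Quotient.out u) * b)) * σ) := by
    rw [hsv]
    show dist (Lam (Quotient.out u) * σ) (Lam (Lam (Quotient.out u) * b) * σ) = _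
    have h5 := (hinv (Lam (Quotient.out u) * σ)⁻¹ (Lam (Quotient.out u) * σ)
      (Lam (Lam (Quotient.out u) * b) * σ)).symm
    rw [h5]
    congr 1
    · group
    · group
  rw [hdist, hcoc]
  have hval : dist (1 : G)
      (σ⁻¹ * ((lamAux H S hSH K m y)⁻¹ * lamAux H S hSH K m (y * b)) * σ)
      ∈ ((fun p : G × G => dist (1 : G) (σ⁻¹ * (p.1⁻¹ * p.2) * σ)) ''
        ((Set.range fq) ×ˢ (Set.range fq))) := by
    exact ⟨(lamAux H S hSH K m y, lamAux H S hSH K m (y * b)),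
      ⟨hmemR y hy, hmemR (y * b) ((K m).mul_mem hy hbK)⟩, rfl⟩
  exact le_trans (hub hval) (le_max_left _ _)
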